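/- For every integer n ≥ 1, Σ_{T ∈ 𝒜_n} ∏_{v internal vertex of T} (2 + q(h_v − 1)) = (n!/2^n) · Σ_{T ∈ 𝒯_n} ∏_{v vertex of T} ((2 + q(h_v − 1))/h_v), where the first sum is over André trees on n vertices and the second over plane binary trees with n vertices; the identity holds for every rational q. -/

import Mathlib

open scoped Classical

noncomputable section

/-- An André tree on `n` vertices, encoded by its parent map `p` on `Fin n`
(vertex `i` stands for label `i+1`): every non-root vertex points to a strictly
larger parent, the root (label `n`) is a fixed point by convention, and each
vertex has at most two children. -/
def IsAndreTree (n : ℕ) (p : Fin n → Fin n) : Prop :=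
  (∀ i : Fin n, (i : ℕ) + 1 < n → (i : ℕ) < (p i : ℕ)) ∧
  (∀ i : Fin n, ¬ (i : ℕ) + 1 < n → p i = i) ∧
  ∀ j : Fin n, (Finset.univ.filter fun i : Fin n => (i : ℕ) + 1 < n ∧ p i = j).card ≤ 2

/-- The set of André trees on `n` vertices. -/
def andreTrees (n : ℕ) : Finset (Fin n → Fin n) :=
  Finset.univ.filter (IsAndreTree n)

/-- The hook length of the vertex `v`: the number of vertices in the subtree
rooted at `v`, i.e. the number of vertices `w` having `v` as an ancestor. -/
def hookA (n : ℕ) (p : Fin n → Fin n) (v : Fin n) : ℕ :=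
  (Finset.univ.filter fun w : Fin n => ∃ k < n, p^[k] w = v).card

/-- The set of internal vertices, i.e. vertices with hook length `> 1`. -/
def internalsA (n : ℕ) (p : Fin n → Fin n) : Finset (Fin n) :=
  Finset.univ.filter fun v => 1 < hookA n p v

end

/-- The product over all vertices `v` of a plane binary tree of `f h_v`, where
`h_v` is the hook length of `v` (the number of vertices of the subtree rooted
at `v`). -/
def hookProd (f : ℕ → ℚ) : Tree Unit → ℚ
  | BinaryTree.nil => 1
  | BinaryTree.node _ l r => f (l.numNodes + r.numNodes + 1) * hookProd f l * hookProd f r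

namespace Stmt8Aux
open Finset

variable {m : ℕ}

/-- reachability by iterating the parent map -/
def Reaches (p : Fin m → Fin m) (w v : Fin m) : Prop := ∃ k, p^[k] w = v

noncomputable def desc (p : Fin m → Fin m) (v : Fin m) : Finset (Fin m) :=
  Finset.univ.filter fun w => Reaches p w v

lemma reaches_refl (p : Fin m → Fin m) (v : Fin m) : Reaches p v v := ⟨0, rfl⟩

lemma mem_desc {p : Fin m → Fin m} {w v : Fin m} : w ∈ desc p v ↔ Reaches p w v := by
  simp [desc]

lemma self_mem_desc (p : Fin m → Fin m) (v : Fin m) : v ∈ desc p v :=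
  mem_desc.2 (reaches_refl p v)

lemma reaches_step {p : Fin m → Fin m} {w v : Fin m} (h : Reaches p (p w) v) :
    Reaches p w v := by
  obtain ⟨k, hk⟩ := h
  exact ⟨k + 1, by rw [Function.iterate_succ_apply]; exact hk⟩

lemma reaches_of_reaches_apply {p : Fin m → Fin m} {w v : Fin m} (h : Reaches p w v)
    (hw : w ≠ v) : Reaches p (p w) v := by
  obtain ⟨k, hk⟩ := h
  cases k with
  | zero => exact absurd hk hw
  | succ k => exact ⟨k, by rw [Function.iterate_succ_apply] at hk; exact hk⟩

lemma reaches_trans {p : Fin m → Fin m} {a b c : Fin m} (h1 : Reaches p a b)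
    (h2 : Reaches p b c) : Reaches p a c := by
  obtain ⟨k, hk⟩ := h1; obtain ⟨l, hl⟩ := h2
  exact ⟨l + k, by rw [Function.iterate_add_apply, hk]; exact hl⟩

lemma iterate_le {p : Fin m → Fin m} (hp : ∀ i, i ≤ p i) (w : Fin m) (k : ℕ) :
    w ≤ p^[k] w := by
  induction k with
  | zero => exact le_refl w
  | succ k ih => rw [Function.iterate_succ_apply']; exact le_trans ih (hp _)

lemma iterate_mono {p : Fin m → Fin m} (hp : ∀ i, i ≤ p i) (w : Fin m) {k l : ℕ}
    (h : k ≤ l) : p^[k] w ≤ p^[l] w := by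
  obtain ⟨d, rfl⟩ := Nat.le.dest h
  rw [add_comm, Function.iterate_add_apply]
  exact iterate_le hp _ d

lemma reaches_le {p : Fin m → Fin m} (hp : ∀ i, i ≤ p i) {w v : Fin m}
    (h : Reaches p w v) : w ≤ v := by
  obtain ⟨k, hk⟩ := h; rw [← hk]; exact iterate_le hp w k

/-- trajectory linearity -/
lemma reaches_or_reaches {p : Fin m → Fin m} {v a b : Fin m} (ha : Reaches p v a)
    (hb : Reaches p v b) : Reaches p a b ∨ Reaches p b a := by
  obtain ⟨k, hk⟩ := ha; obtain ⟨l, hl⟩ := hb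
  rcases le_total k l with h | h
  · left
    obtain ⟨d, rfl⟩ := Nat.le.dest h
    exact ⟨d, by rw [← hk, ← Function.iterate_add_apply, add_comm, ← hl]⟩
  · right
    obtain ⟨d, rfl⟩ := Nat.le.dest h
    exact ⟨d, by rw [← hl, ← Function.iterate_add_apply, add_comm, ← hk]⟩

/-- a reachability witness can be found below `m` -/
lemma exists_lt_of_reaches {p : Fin m → Fin m} (hp : ∀ i, i ≤ p i) {w v : Fin m}
    (h : Reaches p w v) : ∃ k < m, p^[k] w = v := by
  classical
  let k := Nat.find h
  have hk : p^[k] w = v := Nat.find_spec h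
  have hmin : ∀ j < k, p^[j] w ≠ v := fun j hj => Nat.find_min h hj
  refine ⟨k, ?_, hk⟩
  by_contra hge
  push_neg at hge
  -- the map j ↦ p^[j] w is injective on range (k+1)
  have hinj : Set.InjOn (fun j => p^[j] w) (Finset.range (k + 1)) := by
    have key : ∀ a b : ℕ, a < b → b < k + 1 → p^[a] w = p^[b] w → False := by
      intro a b hlt hb hab
      have hfix : p (p^[a] w) = p^[a] w := by
        have h1 : p^[a] w ≤ p^[a+1] w := iterate_mono hp w (by omega)
        have h2 : p^[a+1] w ≤ p^[b] w := iterate_mono hp w (by omega)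
        have h3 : p^[a+1] w = p^[a] w := le_antisymm (hab ▸ h2) h1
        calc p (p^[a] w) = p^[a+1] w := (Function.iterate_succ_apply' p a w).symm
        _ = p^[a] w := h3
      have hconst : ∀ d, p^[a + d] w = p^[a] w := by
        intro d
        induction d with
        | zero => rfl
        | succ d ih => rw [← add_assoc, Function.iterate_succ_apply', ih, hfix]
      have hav : p^[a] w = v := by
        have h5 := hconst (k - a)
        rw [Nat.add_sub_cancel' (by omega : a ≤ k)] at h5
        rw [← h5]; exact hk
      exact hmin a (by omega) hav
    intro a ha b hb hab
    simp only [Finset.coe_range, Set.mem_Iio] at ha hb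
    simp only at hab
    rcases lt_trichotomy a b with h | h | h
    · exact absurd (key a b h hb hab) not_false
    · exact h
    · exact absurd (key b a h ha hab.symm) not_false
  have := Finset.card_le_card_of_injOn (fun j => p^[j] w) (fun _ _ => Finset.mem_univ _) hinj
  simp only [Finset.card_range, Finset.card_univ, Fintype.card_fin] at this
  omega

lemma hookA_eq_card_desc {p : Fin m → Fin m} (hp : ∀ i, i ≤ p i) (v : Fin m) :
    hookA m p v = (desc p v).card := by
  unfold hookA desc
  congr 1
  apply Finset.filter_congr
  intro w _
  constructor
  · rintro ⟨k, _, hk⟩; exact ⟨k, hk⟩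
  · intro h; exact exists_lt_of_reaches hp h

lemma iterate_mem_closed {p : Fin m → Fin m} {C : Fin m → Prop}
    (hC : ∀ v, C v → C (p v)) {w : Fin m} (hw : C w) (k : ℕ) : C (p^[k] w) := by
  induction k with
  | zero => exact hw
  | succ k ih => rw [Function.iterate_succ_apply']; exact hC _ ih

/-- absorption: everything in a closed, strictly-increasing-off-`t`, `t`-bounded set reaches `t` -/
lemma reaches_absorb {p : Fin m → Fin m} {C : Finset (Fin m)} {t : Fin m}
    (hC : ∀ v ∈ C, p v ∈ C) (ht : ∀ v ∈ C, v ≤ t) (hinc : ∀ v ∈ C, v ≠ t → v < p v) :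
    ∀ w ∈ C, Reaches p w t := by
  have key : ∀ d : ℕ, ∀ w ∈ C, (t : ℕ) - (w : ℕ) ≤ d → Reaches p w t := by
    intro d
    induction d with
    | zero =>
      intro w hw hd
      have hle : t ≤ w := by rw [Fin.le_def]; omega
      have : w = t := le_antisymm (ht w hw) hle
      exact this ▸ reaches_refl p t
    | succ d ih =>
      intro w hw hd
      by_cases hwt : w = t
      · exact hwt ▸ reaches_refl p t
      · have h1 : w < p w := hinc w hw hwt
        have h2 : p w ∈ C := hC w hw
        have h3 : (p w : ℕ) ≤ (t : ℕ) := ht _ h2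
        exact reaches_step (ih (p w) h2 (by omega))
  intro w hw
  exact key ((t : ℕ) - (w : ℕ)) w hw le_rfl

/-- relative André structure supported on `S` -/
def isRel (S : Finset (Fin m)) (p : Fin m → Fin m) : Prop :=
  (∀ v, v ∉ S → p v = v) ∧ (∀ v ∈ S, p v ∈ S) ∧
  (∀ v ∈ S, (∃ u ∈ S, v < u) → v < p v) ∧
  (∀ v ∈ S, (∀ u ∈ S, u ≤ v) → p v = v) ∧
  (∀ j : Fin m, (Finset.univ.filter fun i => p i ≠ i ∧ p i = j).card ≤ 2)

noncomputable def relTrees (S : Finset (Fin m)) : Finset (Fin m → Fin m) :=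
  Finset.univ.filter (isRel S)

lemma mem_relTrees {S : Finset (Fin m)} {p : Fin m → Fin m} :
    p ∈ relTrees S ↔ isRel S p := by simp [relTrees]

lemma isRel.le {S : Finset (Fin m)} {p : Fin m → Fin m} (h : isRel S p) : ∀ i, i ≤ p i := by
  intro i
  by_cases hi : i ∈ S
  · by_cases hmax : ∃ u ∈ S, i < u
    · exact le_of_lt (h.2.2.1 i hi hmax)
    · push_neg at hmax
      exact le_of_eq (h.2.2.2.1 i hi hmax).symm
  · exact le_of_eq (h.1 i hi).symm

noncomputable def W (q : ℚ) (p : Fin m → Fin m) : ℚ :=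
  ∏ v ∈ Finset.univ.filter (fun v => 1 < (desc p v).card),
    (2 + q * (((desc p v).card : ℚ) - 1))

lemma desc_eq_singleton {S : Finset (Fin m)} {p : Fin m → Fin m}
    (hfix : ∀ v, v ∉ S → p v = v) (hcl : ∀ v ∈ S, p v ∈ S) {v : Fin m} (hv : v ∉ S) :
    desc p v = {v} := by
  ext w
  simp only [mem_desc, Finset.mem_singleton]
  constructor
  · rintro ⟨k, hk⟩
    by_cases hw : w ∈ S
    · have h3 := iterate_mem_closed (C := fun u => u ∈ S) hcl hw k
      rw [hk] at h3
      exact absurd h3 hv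
    · have h2 : p^[k] w = w := Function.iterate_fixed (hfix w hw) k
      rw [hk] at h2
      exact h2.symm
  · rintro rfl; exact reaches_refl _ _

lemma desc_congr {S : Finset (Fin m)} {c : Fin m} {p p' : Fin m → Fin m}
    (hfix : ∀ v, v ∉ S → p' v = v) (hc : p' c = c)
    (hagree : ∀ v ∈ S, v ≠ c → p' v = p v ∧ p v ∈ S)
    (hcp : p c ∉ S ∨ p c = c)
    (hout : ∀ w, w ∉ S → ∀ k, p^[k] w ∉ S) :
    ∀ v ∈ S, desc p v = desc p' v := by
  intro v hv
  ext w
  simp only [mem_desc]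
  constructor
  · rintro ⟨k, hk⟩
    by_cases hw : w ∈ S
    swap
    · exact absurd hv (hk ▸ hout w hw k)
    · induction k generalizing w hw with
      | zero => exact hk ▸ reaches_refl p' w
      | succ k ih =>
        by_cases hwc : w = c
        · subst hwc
          rcases hcp with h1 | h1
          · have h2 := hout (p w) h1 k
            rw [← Function.iterate_succ_apply] at h2
            exact absurd hv (hk ▸ h2)
          · have h2 : p^[k+1] w = w := Function.iterate_fixed h1 (k+1)
            rw [hk] at h2
            exact ⟨0, h2.symm⟩
        · obtain ⟨he, hmem⟩ := hagree w hw hwc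
          rw [Function.iterate_succ_apply] at hk
          obtain ⟨k', hk'⟩ := ih (p w) hk hmem
          exact ⟨k' + 1, by rw [Function.iterate_succ_apply, he]; exact hk'⟩
  · rintro ⟨k, hk⟩
    by_cases hw : w ∈ S
    swap
    · have h2 : p'^[k] w = w := Function.iterate_fixed (hfix w hw) k
      rw [hk] at h2
      exact ⟨0, h2.symm⟩
    · induction k generalizing w hw with
      | zero => exact ⟨0, hk⟩
      | succ k ih =>
        by_cases hwc : w = c
        · subst hwc
          rw [Function.iterate_succ_apply, hc] at hk
          exact ih w hk hw
        · obtain ⟨he, hmem⟩ := hagree w hw hwc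
          rw [Function.iterate_succ_apply, he] at hk
          exact reaches_step (ih (p w) hk hmem)

lemma desc_map {k : ℕ} {e : Fin k → Fin m} (he : Function.Injective e)
    {p1 : Fin k → Fin k} {p : Fin m → Fin m}
    (hcomm : ∀ x, p (e x) = e (p1 x))
    (hfix : ∀ v, (∀ x, e x ≠ v) → p v = v) (x : Fin k) :
    desc p (e x) = (desc p1 x).image e := by
  have hiter : ∀ j w, p^[j] (e w) = e (p1^[j] w) := by
    intro j
    induction j with
    | zero => intro w; rfl
    | succ j ih =>
      intro w
      rw [Function.iterate_succ_apply, hcomm, ih, ← Function.iterate_succ_apply]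
  ext w
  simp only [mem_desc, Finset.mem_image]
  constructor
  · rintro ⟨j, hj⟩
    by_cases hw : ∃ y, e y = w
    · obtain ⟨y, rfl⟩ := hw
      exact ⟨y, ⟨j, he (by rw [← hiter]; exact hj)⟩, rfl⟩
    · push_neg at hw
      have h2 : p^[j] w = w := Function.iterate_fixed (hfix w hw) j
      rw [hj] at h2
      exact absurd h2 (hw x)
  · rintro ⟨y, hy, rfl⟩
    obtain ⟨j, hj⟩ := hy
    exact ⟨j, by rw [hiter, hj]⟩

noncomputable def A (q : ℚ) (m : ℕ) : ℚ :=
  ∑ p ∈ andreTrees m, ∏ v ∈ internalsA m p, (2 + q * ((hookA m p v : ℚ) - 1))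

lemma isAndre_iff_isRel {p : Fin m → Fin m} :
    IsAndreTree m p ↔ isRel Finset.univ p := by
  constructor
  · rintro ⟨h1, h2, h3⟩
    have hlt : ∀ i : Fin m, (∃ u : Fin m, i < u) → i < p i := by
      rintro i ⟨u, hu⟩
      have hiu : (i : ℕ) < (u : ℕ) := hu
      exact Fin.lt_def.mpr (h1 i (by have := u.isLt; omega))
    have hmax : ∀ i : Fin m, (∀ u : Fin m, u ≤ i) → p i = i := by
      intro i hi
      apply h2
      intro hcon
      have := hi ⟨(i : ℕ) + 1, hcon⟩
      rw [Fin.le_def] at this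
      simp at this
    refine ⟨fun v hv => absurd (Finset.mem_univ v) hv, fun v _ => Finset.mem_univ _,
      ?_, ?_, ?_⟩
    · rintro v - ⟨u, -, hu⟩
      exact hlt v ⟨u, hu⟩
    · intro v _ hv
      exact hmax v fun u => hv u (Finset.mem_univ u)
    · intro j
      have heq : (Finset.univ.filter fun i : Fin m => p i ≠ i ∧ p i = j) =
          (Finset.univ.filter fun i : Fin m => (i : ℕ) + 1 < m ∧ p i = j) := by
        apply Finset.filter_congr
        intro i _
        constructor
        · rintro ⟨hne, hj⟩
          refine ⟨?_, hj⟩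
          by_contra hcon
          exact hne (h2 i hcon)
        · rintro ⟨hi, hj⟩
          refine ⟨?_, hj⟩
          have : i < p i := hlt i ⟨⟨(i : ℕ) + 1, hi⟩, by rw [Fin.lt_def]; simp⟩
          exact (ne_of_lt this).symm
      rw [heq]
      exact h3 j
  · rintro ⟨_, _, h3, h4, h5⟩
    have hlt : ∀ i : Fin m, (i : ℕ) + 1 < m → i < p i := by
      intro i hi
      exact h3 i (Finset.mem_univ i) ⟨⟨(i : ℕ) + 1, hi⟩, Finset.mem_univ _, by rw [Fin.lt_def]; simp⟩
    have hmax : ∀ i : Fin m, ¬ (i : ℕ) + 1 < m → p i = i := by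
      intro i hi
      apply h4 i (Finset.mem_univ i)
      intro u _
      rw [Fin.le_def]
      have := u.isLt
      have := i.isLt
      omega
    refine ⟨fun i hi => Fin.lt_def.mp (hlt i hi), hmax, ?_⟩
    intro j
    have heq : (Finset.univ.filter fun i : Fin m => (i : ℕ) + 1 < m ∧ p i = j) =
        (Finset.univ.filter fun i : Fin m => p i ≠ i ∧ p i = j) := by
      apply Finset.filter_congr
      intro i _
      constructor
      · rintro ⟨hi, hj⟩
        exact ⟨(ne_of_lt (hlt i hi)).symm, hj⟩
      · rintro ⟨hne, hj⟩
        refine ⟨?_, hj⟩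
        by_contra hcon
        exact hne (hmax i hcon)
    rw [heq]
    exact h5 j

lemma andreTrees_eq_relTrees : andreTrees m = relTrees (Finset.univ : Finset (Fin m)) := by
  unfold andreTrees relTrees
  apply Finset.filter_congr
  intro p _
  exact isAndre_iff_isRel

lemma A_eq_relSum (q : ℚ) (m : ℕ) :
    A q m = ∑ p ∈ relTrees (Finset.univ : Finset (Fin m)), W q p := by
  unfold A
  rw [andreTrees_eq_relTrees]
  apply Finset.sum_congr rfl
  intro p hp
  have hple := (mem_relTrees.1 hp).le
  unfold W internalsA
  apply Finset.prod_congr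
  · apply Finset.filter_congr
    intro v _
    rw [hookA_eq_card_desc hple]
  · intro v _
    rw [hookA_eq_card_desc hple]

section Relabel

variable (S : Finset (Fin m))

noncomputable def emb : Fin S.card → Fin m := fun x => ((S.orderIsoOfFin rfl) x : Fin m)

lemma emb_mem (x : Fin S.card) : emb S x ∈ S := ((S.orderIsoOfFin rfl) x).2

lemma emb_strictMono : StrictMono (emb S) := fun _ _ h =>
  Subtype.coe_lt_coe.2 ((S.orderIsoOfFin rfl).strictMono h)

lemma emb_inj : Function.Injective (emb S) := (emb_strictMono S).injective

lemma emb_lt_iff {x y : Fin S.card} : emb S x < emb S y ↔ x < y :=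
  (emb_strictMono S).lt_iff_lt

lemma emb_le_iff {x y : Fin S.card} : emb S x ≤ emb S y ↔ x ≤ y :=
  (emb_strictMono S).le_iff_le

lemma emb_symm {v : Fin m} (h : v ∈ S) : emb S ((S.orderIsoOfFin rfl).symm ⟨v, h⟩) = v := by
  unfold emb
  rw [OrderIso.apply_symm_apply]

lemma emb_surjOn {v : Fin m} (h : v ∈ S) : ∃ x, emb S x = v :=
  ⟨(S.orderIsoOfFin rfl).symm ⟨v, h⟩, emb_symm S h⟩

noncomputable def phi (p1 : Fin S.card → Fin S.card) : Fin m → Fin m := fun v =>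
  if h : v ∈ S then emb S (p1 ((S.orderIsoOfFin rfl).symm ⟨v, h⟩)) else v

noncomputable def psi (p : Fin m → Fin m) : Fin S.card → Fin S.card := fun x =>
  if h : p (emb S x) ∈ S then (S.orderIsoOfFin rfl).symm ⟨p (emb S x), h⟩ else x

lemma phi_emb (p1 : Fin S.card → Fin S.card) (x : Fin S.card) :
    phi S p1 (emb S x) = emb S (p1 x) := by
  unfold phi
  rw [dif_pos (emb_mem S x)]
  congr 1
  congr 1
  have : (⟨emb S x, emb_mem S x⟩ : {a // a ∈ S}) = (S.orderIsoOfFin rfl) x := Subtype.ext rfl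
  rw [this, OrderIso.symm_apply_apply]

lemma phi_notmem (p1 : Fin S.card → Fin S.card) {v : Fin m} (h : v ∉ S) :
    phi S p1 v = v := dif_neg h

lemma phi_mem_S (p1 : Fin S.card → Fin S.card) {v : Fin m} (h : v ∈ S) :
    phi S p1 v ∈ S := by
  unfold phi
  rw [dif_pos h]
  exact emb_mem S _

lemma emb_psi {p : Fin m → Fin m} (hcl : ∀ v ∈ S, p v ∈ S) (x : Fin S.card) :
    emb S (psi S p x) = p (emb S x) := by
  unfold psi
  rw [dif_pos (hcl _ (emb_mem S x))]
  exact emb_symm S _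

lemma desc_phi (p1 : Fin S.card → Fin S.card) (x : Fin S.card) :
    desc (phi S p1) (emb S x) = (desc p1 x).image (emb S) := by
  apply desc_map (emb_inj S) (phi_emb S p1)
  intro v hv
  apply phi_notmem
  intro hvS
  obtain ⟨y, hy⟩ := emb_surjOn S hvS
  exact hv y hy

lemma card_desc_phi (p1 : Fin S.card → Fin S.card) (x : Fin S.card) :
    (desc (phi S p1) (emb S x)).card = (desc p1 x).card := by
  rw [desc_phi, Finset.card_image_of_injective _ (emb_inj S)]

lemma desc_phi_notmem (p1 : Fin S.card → Fin S.card) {v : Fin m} (h : v ∉ S) :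
    desc (phi S p1) v = {v} :=
  desc_eq_singleton (fun _ hu => phi_notmem S p1 hu) (fun _ hu => phi_mem_S S p1 hu) h

lemma W_phi (q : ℚ) (p1 : Fin S.card → Fin S.card) : W q (phi S p1) = W q p1 := by
  unfold W
  have hset : (Finset.univ.filter fun v => 1 < (desc (phi S p1) v).card) =
      (Finset.univ.filter fun x => 1 < (desc p1 x).card).image (emb S) := by
    ext v
    simp only [Finset.mem_filter, Finset.mem_univ, true_and, Finset.mem_image]
    constructor
    · intro hv
      by_cases hvS : v ∈ S
      · obtain ⟨x, rfl⟩ := emb_surjOn S hvS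
        exact ⟨x, by rwa [card_desc_phi] at hv, rfl⟩
      · rw [desc_phi_notmem S p1 hvS] at hv
        simp at hv
    · rintro ⟨x, hx, rfl⟩
      rwa [card_desc_phi]
  rw [hset, Finset.prod_image (fun x _ y _ h => emb_inj S h)]
  apply Finset.prod_congr rfl
  intro x _
  rw [card_desc_phi]

lemma phi_mem_relTrees {p1 : Fin S.card → Fin S.card}
    (h : p1 ∈ relTrees (Finset.univ : Finset (Fin S.card))) : phi S p1 ∈ relTrees S := by
  obtain ⟨-, -, h3, h4, h5⟩ := mem_relTrees.1 h
  rw [mem_relTrees]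
  refine ⟨fun v hv => phi_notmem S p1 hv, fun v hv => phi_mem_S S p1 hv, ?_, ?_, ?_⟩
  · rintro v hv ⟨u, hu, hvu⟩
    obtain ⟨x, rfl⟩ := emb_surjOn S hv
    obtain ⟨y, rfl⟩ := emb_surjOn S hu
    rw [phi_emb]
    rw [emb_lt_iff] at hvu ⊢
    exact h3 x (Finset.mem_univ x) ⟨y, Finset.mem_univ y, hvu⟩
  · intro v hv hmax
    obtain ⟨x, rfl⟩ := emb_surjOn S hv
    rw [phi_emb]
    congr 1
    apply h4 x (Finset.mem_univ x)
    intro y _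
    rw [← emb_le_iff (S := S)]
    exact hmax (emb S y) (emb_mem S y)
  · intro j
    by_cases hj : j ∈ S
    · obtain ⟨xj, rfl⟩ := emb_surjOn S hj
      calc (Finset.univ.filter fun i => phi S p1 i ≠ i ∧ phi S p1 i = emb S xj).card
          ≤ ((Finset.univ.filter fun x => p1 x ≠ x ∧ p1 x = xj).image (emb S)).card := by
            apply Finset.card_le_card
            intro v hv
            simp only [Finset.mem_filter, Finset.mem_univ, true_and] at hv
            obtain ⟨hne, hval⟩ := hv
            have hvS : v ∈ S := by
              by_contra hcon
              exact hne (phi_notmem S p1 hcon)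
            obtain ⟨x, rfl⟩ := emb_surjOn S hvS
            rw [phi_emb] at hne hval
            simp only [Finset.mem_image, Finset.mem_filter, Finset.mem_univ, true_and]
            exact ⟨x, ⟨fun hc => hne (by rw [hc]), emb_inj S hval⟩, rfl⟩
        _ ≤ (Finset.univ.filter fun x => p1 x ≠ x ∧ p1 x = xj).card := Finset.card_image_le
        _ ≤ 2 := h5 xj
    · have : (Finset.univ.filter fun i => phi S p1 i ≠ i ∧ phi S p1 i = j) = ∅ := by
        rw [Finset.eq_empty_iff_forall_notMem]
        intro v hv
        simp only [Finset.mem_filter, Finset.mem_univ, true_and] at hv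
        obtain ⟨hne, hval⟩ := hv
        by_cases hvS : v ∈ S
        · exact hj (hval ▸ phi_mem_S S p1 hvS)
        · exact hne (phi_notmem S p1 hvS)
      rw [this]
      simp

lemma psi_mem_relTrees {p : Fin m → Fin m} (h : p ∈ relTrees S) :
    psi S p ∈ relTrees (Finset.univ : Finset (Fin S.card)) := by
  obtain ⟨h1, h2, h3, h4, h5⟩ := mem_relTrees.1 h
  have hpsi := emb_psi S h2
  rw [mem_relTrees]
  refine ⟨fun x hx => absurd (Finset.mem_univ x) hx, fun x _ => Finset.mem_univ _, ?_, ?_, ?_⟩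
  · rintro x - ⟨y, -, hxy⟩
    rw [← emb_lt_iff (S := S), hpsi]
    exact h3 (emb S x) (emb_mem S x) ⟨emb S y, emb_mem S y, (emb_lt_iff S).2 hxy⟩
  · intro x _ hmax
    apply emb_inj S
    rw [hpsi]
    apply h4 (emb S x) (emb_mem S x)
    intro u hu
    obtain ⟨y, rfl⟩ := emb_surjOn S hu
    exact (emb_le_iff S).2 (hmax y (Finset.mem_univ y))
  · intro j
    calc (Finset.univ.filter fun x => psi S p x ≠ x ∧ psi S p x = j).card
        ≤ (Finset.univ.filter fun i => p i ≠ i ∧ p i = emb S j).card := by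
          apply Finset.card_le_card_of_injOn (emb S)
          · intro x hx
            simp only [Finset.mem_coe, Finset.mem_filter, Finset.mem_univ, true_and] at hx ⊢
            obtain ⟨hne, hval⟩ := hx
            constructor
            · rw [← hpsi]
              exact fun hc => hne (emb_inj S hc)
            · rw [← hpsi, hval]
          · intro x _ y _ hxy
            exact emb_inj S hxy
      _ ≤ 2 := h5 (emb S j)

lemma relSum_eq_A (q : ℚ) (S : Finset (Fin m)) :
    ∑ p ∈ relTrees S, W q p = A q S.card := by
  rw [A_eq_relSum]
  apply Finset.sum_nbij' (i := psi S) (j := phi S)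
  · exact fun p hp => psi_mem_relTrees S hp
  · exact fun p1 hp1 => phi_mem_relTrees S hp1
  · -- left inverse : phi (psi p) = p
    intro p hp
    obtain ⟨h1, h2, -, -, -⟩ := mem_relTrees.1 hp
    funext v
    by_cases hv : v ∈ S
    · obtain ⟨x, rfl⟩ := emb_surjOn S hv
      rw [phi_emb, emb_psi S h2]
    · rw [phi_notmem S _ hv, h1 v hv]
  · -- right inverse : psi (phi p1) = p1
    intro p1 _
    funext x
    apply emb_inj S
    rw [emb_psi S (fun v hv => phi_mem_S S p1 hv), phi_emb]
  · -- weights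
    intro p hp
    obtain ⟨h1, h2, -, -, -⟩ := mem_relTrees.1 hp
    have hright : phi S (psi S p) = p := by
      funext v
      by_cases hv : v ∈ S
      · obtain ⟨x, rfl⟩ := emb_surjOn S hv
        rw [phi_emb, emb_psi S h2]
      · rw [phi_notmem S _ hv, h1 v hv]
    calc W q p = W q (phi S (psi S p)) := by rw [hright]
    _ = W q (psi S p) := W_phi S q _

end Relabel

section Glue

variable {n : ℕ}

/-- the root of `Fin (n+2)` -/
def RR (n : ℕ) : Fin (n + 2) := Fin.last (n + 1)

/-- the largest non-root vertex -/
def LL (n : ℕ) : Fin (n + 2) := Fin.castSucc (Fin.last n)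

lemma LL_ne_RR : LL n ≠ RR n := by
  simp [LL, RR, Fin.ext_iff]

lemma ne_RR_lt {v : Fin (n + 2)} (h : v ≠ RR n) : v < RR n :=
  lt_of_le_of_ne (Fin.le_last v) (by simpa [RR] using h)

def nonroot (n : ℕ) : Finset (Fin (n + 2)) := Finset.univ.erase (RR n)

lemma mem_nonroot {v : Fin (n + 2)} : v ∈ nonroot n ↔ v ≠ RR n := by
  simp [nonroot]

lemma rel_univ_fix {p : Fin (n + 2) → Fin (n + 2)}
    (h : isRel Finset.univ p) : p (RR n) = RR n :=
  h.2.2.2.1 _ (Finset.mem_univ _) (fun u _ => Fin.le_last u)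

lemma rel_univ_lt {p : Fin (n + 2) → Fin (n + 2)}
    (h : isRel Finset.univ p) {v : Fin (n + 2)} (hv : v ≠ RR n) : v < p v :=
  h.2.2.1 v (Finset.mem_univ v) ⟨RR n, Finset.mem_univ _, ne_RR_lt hv⟩

lemma rel_univ_reaches_RR {p : Fin (n + 2) → Fin (n + 2)}
    (h : isRel Finset.univ p) (v : Fin (n + 2)) : Reaches p v (RR n) := by
  apply reaches_absorb (C := Finset.univ) (fun u _ => Finset.mem_univ _)
    (fun u _ => Fin.le_last u) _ v (Finset.mem_univ v)
  intro u _ hu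
  exact rel_univ_lt h hu

lemma reaches_RR_eq {p : Fin (n + 2) → Fin (n + 2)}
    (h : isRel Finset.univ p) {v : Fin (n + 2)} (hv : Reaches p (RR n) v) : v = RR n := by
  obtain ⟨k, hk⟩ := hv
  rw [Function.iterate_fixed (rel_univ_fix h) k] at hk
  exact hk.symm

/-- `c` is a child of the root -/
def IsChild (p : Fin (n + 2) → Fin (n + 2)) (c : Fin (n + 2)) : Prop :=
  p c = RR n ∧ c ≠ RR n

lemma exists_child_over {p : Fin (n + 2) → Fin (n + 2)} (h : isRel Finset.univ p)
    {v : Fin (n + 2)} (hv : v ≠ RR n) : ∃ c, IsChild p c ∧ Reaches p v c := by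
  classical
  have hre : Reaches p v (RR n) := rel_univ_reaches_RR h v
  set k := Nat.find hre with hkdef
  have hk : p^[k] v = RR n := Nat.find_spec hre
  have hkpos : k ≠ 0 := by
    intro h0
    rw [h0] at hk
    exact hv hk
  refine ⟨p^[k-1] v, ⟨?_, ?_⟩, ⟨k - 1, rfl⟩⟩
  · rw [← Function.iterate_succ_apply' p (k-1) v]
    have : (k - 1).succ = k := by omega
    rw [this]
    exact hk
  · exact Nat.find_min hre (by omega)

lemma child_reaches_child {p : Fin (n + 2) → Fin (n + 2)}
    (h : isRel Finset.univ p) {c c' : Fin (n + 2)} (hc : IsChild p c)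
    (hre : Reaches p c c') (hc' : c' ≠ RR n) : c' = c := by
  obtain ⟨k, hk⟩ := hre
  cases k with
  | zero => exact hk.symm
  | succ k =>
    rw [Function.iterate_succ_apply, hc.1, Function.iterate_fixed (rel_univ_fix h) k] at hk
    exact absurd hk.symm hc'

lemma children_eq {p : Fin (n + 2) → Fin (n + 2)} (h : isRel Finset.univ p)
    {c c' v : Fin (n + 2)} (hc : IsChild p c) (hc' : IsChild p c')
    (h1 : Reaches p v c) (h2 : Reaches p v c') : c = c' := by
  rcases reaches_or_reaches h1 h2 with h3 | h3
  · exact (child_reaches_child h hc h3 hc'.2).symm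
  · exact child_reaches_child h hc' h3 hc.2

lemma children_ne_three {p : Fin (n + 2) → Fin (n + 2)} (h : isRel Finset.univ p)
    {c1 c2 c3 : Fin (n + 2)} (h1 : IsChild p c1) (h2 : IsChild p c2) (h3 : IsChild p c3) :
    c1 = c2 ∨ c1 = c3 ∨ c2 = c3 := by
  by_contra hcon
  push_neg at hcon
  obtain ⟨h12, h13, h23⟩ := hcon
  have hsub : ({c1, c2, c3} : Finset (Fin (n + 2))) ⊆
      Finset.univ.filter fun i => p i ≠ i ∧ p i = RR n := by
    intro c hc
    simp only [Finset.mem_insert, Finset.mem_singleton] at hc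
    simp only [Finset.mem_filter, Finset.mem_univ, true_and]
    rcases hc with rfl | rfl | rfl
    · exact ⟨fun hcon => h1.2 (by rw [← hcon, h1.1]), h1.1⟩
    · exact ⟨fun hcon => h2.2 (by rw [← hcon, h2.1]), h2.1⟩
    · exact ⟨fun hcon => h3.2 (by rw [← hcon, h3.1]), h3.1⟩
  have hcard : ({c1, c2, c3} : Finset (Fin (n + 2))).card = 3 := by
    rw [Finset.card_insert_of_notMem (by simp [h12, h13]),
      Finset.card_insert_of_notMem (by simp [h23]), Finset.card_singleton]
  have := Finset.card_le_card hsub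
  have h5 := h.2.2.2.2 (RR n)
  omega

/-- glue two trees with disjoint supports under a common root -/
noncomputable def glue (p1 p2 : Fin (n + 2) → Fin (n + 2)) : Fin (n + 2) → Fin (n + 2) :=
  fun v => if v = RR n then RR n else if p1 v ≠ v then p1 v else if p2 v ≠ v then p2 v else RR n

lemma glue_comm (p1 p2 : Fin (n + 2) → Fin (n + 2))
    (hdisj : ∀ v, p1 v = v ∨ p2 v = v) : glue p1 p2 = glue p2 p1 := by
  funext v
  unfold glue
  by_cases hR : v = RR n
  · simp [hR]
  · rcases hdisj v with h | h <;> simp [h, hR]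

/-- restriction of a tree to a root subtree -/
noncomputable def restr (p : Fin (n + 2) → Fin (n + 2)) (D : Finset (Fin (n + 2))) :
    Fin (n + 2) → Fin (n + 2) :=
  fun v => if v ∈ D ∧ p v ≠ RR n then p v else v

section GlueCtx

variable {p1 p2 : Fin (n + 2) → Fin (n + 2)} {S : Finset (Fin (n + 2))}

lemma rel_support {p : Fin (n + 2) → Fin (n + 2)} {D : Finset (Fin (n + 2))}
    (h : isRel D p) {v : Fin (n + 2)} (hv : p v ≠ v) : v ∈ D := by
  by_contra hcon
  exact hv (h.1 v hcon)

-- context: S ⊆ nonroot, T = nonroot \ S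
variable (hS : S ⊆ nonroot n) (hp1 : isRel S p1) (hp2 : isRel (nonroot n \ S) p2)

include hS in
lemma RR_not_mem_S : RR n ∉ S := fun h => (mem_nonroot.1 (hS h)) rfl

lemma RR_not_mem_T : RR n ∉ nonroot n \ S := fun h =>
  (mem_nonroot.1 (Finset.mem_sdiff.1 h).1) rfl

include hS in
lemma glue_eq_of_moved (v : Fin (n + 2)) (hv : v ∈ S) (hmv : p1 v ≠ v) :
    glue p1 p2 v = p1 v := by
  have hvR : v ≠ RR n := mem_nonroot.1 (hS hv)
  unfold glue
  rw [if_neg hvR, if_pos hmv]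

lemma glue_eq_RR_of_fixed (v : Fin (n + 2)) (hv : v ≠ RR n) (h1 : p1 v = v) (h2 : p2 v = v) :
    glue p1 p2 v = RR n := by
  unfold glue
  rw [if_neg hv, if_neg (by simp [h1]), if_neg (by simp [h2])]

lemma glue_RR : glue p1 p2 (RR n) = RR n := by unfold glue; simp

include hp2 in
lemma p2_fix_of_mem_S (v : Fin (n + 2)) (hv : v ∈ S) : p2 v = v :=
  hp2.1 v (by simp [Finset.mem_sdiff, hv])

include hp1 in
lemma p1_fix_of_mem_T (v : Fin (n + 2)) (hv : v ∈ nonroot n \ S) : p1 v = v :=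
  hp1.1 v (Finset.mem_sdiff.1 hv).2

include hS hp1 hp2 in
lemma glue_lt (v : Fin (n + 2)) (hv : v ≠ RR n) : v < glue p1 p2 v := by
  have hcover : v ∈ S ∨ v ∈ nonroot n \ S := by
    by_cases h : v ∈ S
    · exact Or.inl h
    · exact Or.inr (Finset.mem_sdiff.2 ⟨mem_nonroot.2 hv, h⟩)
  rcases hcover with h | h
  · by_cases hup : ∃ u ∈ S, v < u
    · have := hp1.2.2.1 v h hup
      rw [glue_eq_of_moved hS v h (ne_of_gt this)]
      exact this
    · push_neg at hup
      have h1 : p1 v = v := hp1.2.2.2.1 v h hup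
      rw [glue_eq_RR_of_fixed v hv h1 (p2_fix_of_mem_S hp2 v h)]
      exact ne_RR_lt hv
  · by_cases hup : ∃ u ∈ nonroot n \ S, v < u
    · have hlt := hp2.2.2.1 v h hup
      have hvS : v ∉ S := (Finset.mem_sdiff.1 h).2
      unfold glue
      rw [if_neg hv, if_neg (by simp [hp1.1 v hvS]), if_pos (ne_of_gt hlt)]
      exact hlt
    · push_neg at hup
      have h2 : p2 v = v := hp2.2.2.2.1 v h hup
      rw [glue_eq_RR_of_fixed v hv (p1_fix_of_mem_T hp1 v h) h2]
      exact ne_RR_lt hv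

include hS hp1 hp2 in
lemma glue_mem_rel_univ : isRel Finset.univ (glue p1 p2) := by
  refine ⟨fun v hv => absurd (Finset.mem_univ v) hv, fun v _ => Finset.mem_univ _, ?_, ?_, ?_⟩
  · rintro v - ⟨u, -, hu⟩
    apply glue_lt hS hp1 hp2
    intro hcon
    subst hcon
    exact absurd hu (not_lt.2 (Fin.le_last u))
  · intro v _ hmax
    have hv : v = RR n := le_antisymm (Fin.le_last v) (hmax (RR n) (Finset.mem_univ _))
    rw [hv]
    exact glue_RR
  · intro j
    by_cases hjR : j = RR n
    · subst hjR
      have hsub : (Finset.univ.filter fun i => glue p1 p2 i ≠ i ∧ glue p1 p2 i = RR n) ⊆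
          (S.filter fun i => p1 i = i) ∪ ((nonroot n \ S).filter fun i => p2 i = i) := by
        intro i hi
        simp only [Finset.mem_filter, Finset.mem_univ, true_and] at hi
        obtain ⟨hne, hval⟩ := hi
        have hiR : i ≠ RR n := by
          intro hcon
          subst hcon
          exact hne glue_RR
        by_cases hiS : i ∈ S
        · have h1 : p1 i = i := by
            by_contra hcon
            rw [glue_eq_of_moved hS i hiS hcon] at hval
            exact RR_not_mem_S hS (hval ▸ hp1.2.1 i hiS)
          exact Finset.mem_union_left _ (Finset.mem_filter.2 ⟨hiS, h1⟩)
        · have hiT : i ∈ nonroot n \ S := Finset.mem_sdiff.2 ⟨mem_nonroot.2 hiR, hiS⟩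
          have h2 : p2 i = i := by
            by_contra hcon
            unfold glue at hval
            rw [if_neg hiR, if_neg (by simp [hp1.1 i hiS]), if_pos hcon] at hval
            exact RR_not_mem_T (hval ▸ hp2.2.1 i hiT)
          exact Finset.mem_union_right _ (Finset.mem_filter.2 ⟨hiT, h2⟩)
      have hc1 : (S.filter fun i => p1 i = i).card ≤ 1 := by
        rw [Finset.card_le_one]
        intro a ha b hb
        simp only [Finset.mem_filter] at ha hb
        by_contra hab
        rcases lt_or_gt_of_ne hab with h | h
        · exact absurd (hp1.2.2.1 a ha.1 ⟨b, hb.1, h⟩) (by rw [ha.2]; exact lt_irrefl a)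
        · exact absurd (hp1.2.2.1 b hb.1 ⟨a, ha.1, h⟩) (by rw [hb.2]; exact lt_irrefl b)
      have hc2 : ((nonroot n \ S).filter fun i => p2 i = i).card ≤ 1 := by
        rw [Finset.card_le_one]
        intro a ha b hb
        simp only [Finset.mem_filter] at ha hb
        by_contra hab
        rcases lt_or_gt_of_ne hab with h | h
        · exact absurd (hp2.2.2.1 a ha.1 ⟨b, hb.1, h⟩) (by rw [ha.2]; exact lt_irrefl a)
        · exact absurd (hp2.2.2.1 b hb.1 ⟨a, ha.1, h⟩) (by rw [hb.2]; exact lt_irrefl b)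
      calc (Finset.univ.filter fun i => glue p1 p2 i ≠ i ∧ glue p1 p2 i = RR n).card
          ≤ _ := Finset.card_le_card hsub
        _ ≤ _ := Finset.card_union_le _ _
        _ ≤ 2 := by omega
    · by_cases hjS : j ∈ S
      · have hsub : (Finset.univ.filter fun i => glue p1 p2 i ≠ i ∧ glue p1 p2 i = j) ⊆
            Finset.univ.filter fun i => p1 i ≠ i ∧ p1 i = j := by
          intro i hi
          simp only [Finset.mem_filter, Finset.mem_univ, true_and] at hi ⊢
          obtain ⟨hne, hval⟩ := hi
          have hiR : i ≠ RR n := fun hcon => hne (by rw [hcon]; exact glue_RR)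
          by_cases h1 : p1 i ≠ i
          · have hiS : i ∈ S := rel_support hp1 h1
            rw [glue_eq_of_moved hS i hiS h1] at hval
            exact ⟨h1, hval⟩
          · push_neg at h1
            exfalso
            by_cases h2 : p2 i ≠ i
            · have hiT := rel_support hp2 h2
              unfold glue at hval
              rw [if_neg hiR, if_neg (by simp [h1]), if_pos h2] at hval
              have := hp2.2.1 i hiT
              rw [hval] at this
              exact (Finset.mem_sdiff.1 this).2 hjS
            · push_neg at h2
              rw [glue_eq_RR_of_fixed i hiR h1 h2] at hval
              exact hjR hval.symm
        exact le_trans (Finset.card_le_card hsub) (hp1.2.2.2.2 j)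
      · by_cases hjT : j ∈ nonroot n \ S
        · have hsub : (Finset.univ.filter fun i => glue p1 p2 i ≠ i ∧ glue p1 p2 i = j) ⊆
              Finset.univ.filter fun i => p2 i ≠ i ∧ p2 i = j := by
            intro i hi
            simp only [Finset.mem_filter, Finset.mem_univ, true_and] at hi ⊢
            obtain ⟨hne, hval⟩ := hi
            have hiR : i ≠ RR n := fun hcon => hne (by rw [hcon]; exact glue_RR)
            by_cases h1 : p1 i ≠ i
            · exfalso
              have hiS : i ∈ S := rel_support hp1 h1
              rw [glue_eq_of_moved hS i hiS h1] at hval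
              exact (Finset.mem_sdiff.1 hjT).2 (hval ▸ hp1.2.1 i hiS)
            · push_neg at h1
              by_cases h2 : p2 i ≠ i
              · unfold glue at hval
                rw [if_neg hiR, if_neg (by simp [h1]), if_pos h2] at hval
                exact ⟨h2, hval⟩
              · push_neg at h2
                exfalso
                rw [glue_eq_RR_of_fixed i hiR h1 h2] at hval
                exact hjR hval.symm
          exact le_trans (Finset.card_le_card hsub) (hp2.2.2.2.2 j)
        · have hempty : (Finset.univ.filter fun i => glue p1 p2 i ≠ i ∧ glue p1 p2 i = j) = ∅ := by
            rw [Finset.eq_empty_iff_forall_notMem]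
            intro i hi
            simp only [Finset.mem_filter, Finset.mem_univ, true_and] at hi
            obtain ⟨hne, hval⟩ := hi
            have hiR : i ≠ RR n := fun hcon => hne (by rw [hcon]; exact glue_RR)
            by_cases h1 : p1 i ≠ i
            · have hiS : i ∈ S := rel_support hp1 h1
              rw [glue_eq_of_moved hS i hiS h1] at hval
              exact hjS (hval ▸ hp1.2.1 i hiS)
            · push_neg at h1
              by_cases h2 : p2 i ≠ i
              · have hiT := rel_support hp2 h2
                unfold glue at hval
                rw [if_neg hiR, if_neg (by simp [h1]), if_pos h2] at hval
                exact hjT (hval ▸ hp2.2.1 i hiT)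
              · push_neg at h2
                rw [glue_eq_RR_of_fixed i hiR h1 h2] at hval
                exact hjR hval.symm
          rw [hempty]
          simp

include hp1 hp2 in
lemma glue_disj : ∀ v, p1 v = v ∨ p2 v = v := by
  intro v
  by_cases hv : v ∈ S
  · exact Or.inr (p2_fix_of_mem_S hp2 v hv)
  · exact Or.inl (hp1.1 v hv)

include hS hp1 hp2 in
lemma glue_out_closed : ∀ w, w ∉ S → glue p1 p2 w ∉ S := by
  intro w hw
  by_cases hwR : w = RR n
  · subst hwR
    rw [glue_RR]
    exact RR_not_mem_S hS
  · have hwT : w ∈ nonroot n \ S := Finset.mem_sdiff.2 ⟨mem_nonroot.2 hwR, hw⟩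
    by_cases h2 : p2 w ≠ w
    · unfold glue
      rw [if_neg hwR, if_neg (by simp [hp1.1 w hw]), if_pos h2]
      exact (Finset.mem_sdiff.1 (hp2.2.1 w hwT)).2
    · push_neg at h2
      rw [glue_eq_RR_of_fixed w hwR (hp1.1 w hw) h2]
      exact RR_not_mem_S hS

include hS hp1 hp2 in
lemma desc_glue_S : ∀ v ∈ S, desc (glue p1 p2) v = desc p1 v := by
  intro v hv
  have hne : S.Nonempty := ⟨v, hv⟩
  set c := S.max' hne with hc
  have hcS : c ∈ S := S.max'_mem hne
  have hp1c : p1 c = c := hp1.2.2.2.1 c hcS (fun u hu => S.le_max' u hu)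
  refine desc_congr (c := c) hp1.1 hp1c ?_ ?_ ?_ v hv
  · intro v' hv' hv'c
    have hlt : v' < c := lt_of_le_of_ne (S.le_max' v' hv') hv'c
    have hmv : v' < p1 v' := hp1.2.2.1 v' hv' ⟨c, hcS, hlt⟩
    rw [glue_eq_of_moved hS v' hv' (ne_of_gt hmv)]
    exact ⟨rfl, hp1.2.1 v' hv'⟩
  · left
    rw [glue_eq_RR_of_fixed c (mem_nonroot.1 (hS hcS)) hp1c (p2_fix_of_mem_S hp2 c hcS)]
    exact RR_not_mem_S hS
  · intro w hw k
    exact iterate_mem_closed (C := fun u => u ∉ S) (glue_out_closed hS hp1 hp2) hw k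

include hS hp1 hp2 in
lemma desc_glue_T : ∀ v ∈ nonroot n \ S, desc (glue p1 p2) v = desc p2 v := by
  have hsd : nonroot n \ (nonroot n \ S) = S := Finset.sdiff_sdiff_eq_self hS
  have hp1' : isRel (nonroot n \ (nonroot n \ S)) p1 := by rw [hsd]; exact hp1
  rw [glue_comm p1 p2 (glue_disj hp1 hp2)]
  exact desc_glue_S (Finset.sdiff_subset) hp2 hp1'

include hS hp1 hp2 in
lemma desc_glue_RR : desc (glue p1 p2) (RR n) = Finset.univ := by
  ext w
  simp only [Finset.mem_univ, iff_true, mem_desc]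
  exact rel_univ_reaches_RR (glue_mem_rel_univ hS hp1 hp2) w

include hS hp1 hp2 in
lemma W_glue (q : ℚ) :
    W q (glue p1 p2) = (2 + q * ((n : ℚ) + 1)) * (W q p1 * W q p2) := by
  classical
  set g := glue p1 p2 with hg
  have hI1S : ∀ v, 1 < (desc p1 v).card → v ∈ S := by
    intro v hv
    by_contra hcon
    rw [desc_eq_singleton hp1.1 hp1.2.1 hcon] at hv
    simp at hv
  have hI2T : ∀ v, 1 < (desc p2 v).card → v ∈ nonroot n \ S := by
    intro v hv
    by_contra hcon
    rw [desc_eq_singleton hp2.1 hp2.2.1 hcon] at hv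
    simp at hv
  have hRcard : (desc g (RR n)).card = n + 2 := by
    rw [desc_glue_RR hS hp1 hp2]
    simp
  have hset : (Finset.univ.filter fun v => 1 < (desc g v).card) =
      insert (RR n) ((Finset.univ.filter fun v => 1 < (desc p1 v).card) ∪
        (Finset.univ.filter fun v => 1 < (desc p2 v).card)) := by
    ext v
    simp only [Finset.mem_filter, Finset.mem_univ, true_and, Finset.mem_insert,
      Finset.mem_union]
    constructor
    · intro hv
      by_cases hvR : v = RR n
      · exact Or.inl hvR
      · right
        by_cases hvS : v ∈ S
        · rw [desc_glue_S hS hp1 hp2 v hvS] at hv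
          exact Or.inl hv
        · have hvT : v ∈ nonroot n \ S := Finset.mem_sdiff.2 ⟨mem_nonroot.2 hvR, hvS⟩
          rw [desc_glue_T hS hp1 hp2 v hvT] at hv
          exact Or.inr hv
    · intro hv
      rcases hv with rfl | hv | hv
      · rw [hRcard]; omega
      · rwa [desc_glue_S hS hp1 hp2 v (hI1S v hv)]
      · rwa [desc_glue_T hS hp1 hp2 v (hI2T v hv)]
  have hdisjI : Disjoint (Finset.univ.filter fun v => 1 < (desc p1 v).card)
      (Finset.univ.filter fun v => 1 < (desc p2 v).card) := by
    rw [Finset.disjoint_left]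
    intro v hv1 hv2
    simp only [Finset.mem_filter, Finset.mem_univ, true_and] at hv1 hv2
    exact (Finset.mem_sdiff.1 (hI2T v hv2)).2 (hI1S v hv1)
  have hRnotmem : RR n ∉ (Finset.univ.filter fun v => 1 < (desc p1 v).card) ∪
      (Finset.univ.filter fun v => 1 < (desc p2 v).card) := by
    rw [Finset.mem_union]
    rintro (h | h)
    · simp only [Finset.mem_filter, Finset.mem_univ, true_and] at h
      exact RR_not_mem_S hS (hI1S _ h)
    · simp only [Finset.mem_filter, Finset.mem_univ, true_and] at h
      exact RR_not_mem_T (hI2T _ h)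
  unfold W
  rw [hset, Finset.prod_insert hRnotmem, Finset.prod_union hdisjI, hRcard]
  have hcast : ((n + 2 : ℕ) : ℚ) - 1 = (n : ℚ) + 1 := by push_cast; ring
  rw [hcast]
  congr 1
  congr 1
  · apply Finset.prod_congr rfl
    intro v hv
    simp only [Finset.mem_filter, Finset.mem_univ, true_and] at hv
    rw [desc_glue_S hS hp1 hp2 v (hI1S v hv)]
  · apply Finset.prod_congr rfl
    intro v hv
    simp only [Finset.mem_filter, Finset.mem_univ, true_and] at hv
    rw [desc_glue_T hS hp1 hp2 v (hI2T v hv)]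

end GlueCtx

section Split

variable {p : Fin (n + 2) → Fin (n + 2)}

/-- the set of vertices in the same root subtree as the largest non-root vertex -/
noncomputable def sideL (p : Fin (n + 2) → Fin (n + 2)) : Finset (Fin (n + 2)) :=
  (nonroot n).filter fun v => ∃ c, IsChild p c ∧ Reaches p v c ∧ Reaches p (LL n) c

lemma sideL_subset : sideL p ⊆ nonroot n := Finset.filter_subset _ _

lemma mem_sideL_iff (hrel : isRel Finset.univ p) {cL : Fin (n + 2)} (hcL : IsChild p cL)
    (hLcL : Reaches p (LL n) cL) {v : Fin (n + 2)} :
    v ∈ sideL p ↔ Reaches p v cL := by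
  unfold sideL
  simp only [Finset.mem_filter, mem_nonroot]
  constructor
  · rintro ⟨-, c, hc, hvc, hLc⟩
    rwa [children_eq hrel hc hcL hLc hLcL] at hvc
  · intro hv
    refine ⟨?_, cL, hcL, hv, hLcL⟩
    intro hcon
    subst hcon
    exact hcL.2 (reaches_RR_eq hrel hv)

lemma restr_mem_rel (hrel : isRel Finset.univ p) {D : Finset (Fin (n + 2))}
    (hD1 : D ⊆ nonroot n) (hD2 : ∀ v ∈ D, p v ≠ RR n → p v ∈ D)
    (hD3 : ∀ v ∈ D, p v = RR n → ∀ u ∈ D, u ≤ v) : isRel D (restr p D) := by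
  have hfix : ∀ v, v ∉ D → restr p D v = v := by
    intro v hv
    unfold restr
    rw [if_neg (by tauto)]
  refine ⟨hfix, ?_, ?_, ?_, ?_⟩
  · intro v hv
    by_cases hpv : p v ≠ RR n
    · unfold restr
      rw [if_pos ⟨hv, hpv⟩]
      exact hD2 v hv hpv
    · unfold restr
      rw [if_neg (by tauto)]
      exact hv
  · rintro v hv ⟨u, hu, hvu⟩
    have hpv : p v ≠ RR n := by
      intro hcon
      exact absurd (hD3 v hv hcon u hu) (not_le.2 hvu)
    unfold restr
    rw [if_pos ⟨hv, hpv⟩]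
    exact rel_univ_lt hrel (mem_nonroot.1 (hD1 hv))
  · intro v hv hmax
    by_cases hpv : p v ≠ RR n
    · exfalso
      have h1 : p v ∈ D := hD2 v hv hpv
      have h2 : v < p v := rel_univ_lt hrel (mem_nonroot.1 (hD1 hv))
      exact absurd (hmax (p v) h1) (not_le.2 h2)
    · unfold restr
      rw [if_neg (by tauto)]
  · intro j
    apply le_trans (Finset.card_le_card _) (hrel.2.2.2.2 j)
    intro i hi
    simp only [Finset.mem_filter, Finset.mem_univ, true_and] at hi ⊢
    obtain ⟨hne, hval⟩ := hi
    unfold restr at hne hval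
    by_cases hc : i ∈ D ∧ p i ≠ RR n
    · rw [if_pos hc] at hne hval
      exact ⟨hne, hval⟩
    · rw [if_neg hc] at hne
      exact absurd rfl hne

lemma sideL_hD2 (hrel : isRel Finset.univ p) {cL : Fin (n + 2)} (hcL : IsChild p cL)
    (hLcL : Reaches p (LL n) cL) :
    ∀ v ∈ sideL p, p v ≠ RR n → p v ∈ sideL p := by
  intro v hv hpv
  rw [mem_sideL_iff hrel hcL hLcL] at hv ⊢
  apply reaches_of_reaches_apply hv
  intro hcon
  subst hcon
  exact hpv hcL.1

lemma sideL_hD3 (hrel : isRel Finset.univ p) {cL : Fin (n + 2)} (hcL : IsChild p cL)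
    (hLcL : Reaches p (LL n) cL) :
    ∀ v ∈ sideL p, p v = RR n → ∀ u ∈ sideL p, u ≤ v := by
  intro v hv hpv u hu
  rw [mem_sideL_iff hrel hcL hLcL] at hv hu
  have hvR : v ≠ RR n := by
    intro hcon
    subst hcon
    exact hcL.2 (reaches_RR_eq hrel hv)
  have hveq : cL = v := child_reaches_child hrel ⟨hpv, hvR⟩ hv hcL.2
  rw [← hveq]
  exact reaches_le hrel.le hu

lemma sideT_hD2 (hrel : isRel Finset.univ p) {cL : Fin (n + 2)} (hcL : IsChild p cL)
    (hLcL : Reaches p (LL n) cL) :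
    ∀ v ∈ nonroot n \ sideL p, p v ≠ RR n → p v ∈ nonroot n \ sideL p := by
  intro v hv hpv
  obtain ⟨hv1, hv2⟩ := Finset.mem_sdiff.1 hv
  refine Finset.mem_sdiff.2 ⟨mem_nonroot.2 hpv, ?_⟩
  intro hcon
  rw [mem_sideL_iff hrel hcL hLcL] at hcon
  exact hv2 ((mem_sideL_iff hrel hcL hLcL).2 (reaches_step hcon))

lemma sideT_hD3 (hrel : isRel Finset.univ p) {cL : Fin (n + 2)} (hcL : IsChild p cL)
    (hLcL : Reaches p (LL n) cL) :
    ∀ v ∈ nonroot n \ sideL p, p v = RR n → ∀ u ∈ nonroot n \ sideL p, u ≤ v := by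
  intro v hv hpv u hu
  obtain ⟨hv1, hv2⟩ := Finset.mem_sdiff.1 hv
  obtain ⟨hu1, hu2⟩ := Finset.mem_sdiff.1 hu
  have hvchild : IsChild p v := ⟨hpv, mem_nonroot.1 hv1⟩
  obtain ⟨cu, hcu, hucu⟩ := exists_child_over hrel (mem_nonroot.1 hu1)
  have hcucL : cu ≠ cL := by
    intro hcon
    exact hu2 ((mem_sideL_iff hrel hcL hLcL).2 (hcon ▸ hucu))
  have hvcL : v ≠ cL := by
    intro hcon
    exact hv2 ((mem_sideL_iff hrel hcL hLcL).2 (hcon ▸ reaches_refl p v))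
  have h3 := children_ne_three hrel hvchild hcu hcL
  have hvcu : v = cu := by tauto
  rw [hvcu]
  exact reaches_le hrel.le hucu

lemma glue_restr (hrel : isRel Finset.univ p) {D : Finset (Fin (n + 2))}
    (hD : D ⊆ nonroot n) :
    glue (restr p D) (restr p (nonroot n \ D)) = p := by
  funext v
  by_cases hvR : v = RR n
  · subst hvR
    rw [glue_RR, rel_univ_fix hrel]
  · have hvlt : v < p v := rel_univ_lt hrel hvR
    by_cases hvD : v ∈ D
    · by_cases hpv : p v ≠ RR n
      · have h1 : restr p D v = p v := by unfold restr; rw [if_pos ⟨hvD, hpv⟩]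
        unfold glue
        rw [if_neg hvR, if_pos (by rw [h1]; exact ne_of_gt hvlt)]
        exact h1
      · push_neg at hpv
        have h1 : restr p D v = v := by unfold restr; rw [if_neg (by tauto)]
        have h2 : restr p (nonroot n \ D) v = v := by
          unfold restr
          rw [if_neg (by simp [hvD])]
        unfold glue
        rw [if_neg hvR, if_neg (by simp [h1]), if_neg (by simp [h2]), hpv]
    · have hvT : v ∈ nonroot n \ D := Finset.mem_sdiff.2 ⟨mem_nonroot.2 hvR, hvD⟩
      have h1 : restr p D v = v := by unfold restr; rw [if_neg (by tauto)]
      by_cases hpv : p v ≠ RR n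
      · have h2 : restr p (nonroot n \ D) v = p v := by
          unfold restr; rw [if_pos ⟨hvT, hpv⟩]
        unfold glue
        rw [if_neg hvR, if_neg (by simp [h1]), if_pos (by rw [h2]; exact ne_of_gt hvlt)]
        exact h2
      · push_neg at hpv
        have h2 : restr p (nonroot n \ D) v = v := by
          unfold restr; rw [if_neg (by tauto)]
        unfold glue
        rw [if_neg hvR, if_neg (by simp [h1]), if_neg (by simp [h2]), hpv]

lemma sideL_glue {p1 p2 : Fin (n + 2) → Fin (n + 2)} {S : Finset (Fin (n + 2))}
    (hS : S ⊆ nonroot n) (hp1 : isRel S p1) (hp2 : isRel (nonroot n \ S) p2)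
    (hL : LL n ∈ S) : sideL (glue p1 p2) = S := by
  have hne : S.Nonempty := ⟨_, hL⟩
  set c := S.max' hne with hcdef
  have hcS : c ∈ S := S.max'_mem hne
  have hp1c : p1 c = c := hp1.2.2.2.1 c hcS (fun u hu => S.le_max' u hu)
  have hgrel : isRel Finset.univ (glue p1 p2) := glue_mem_rel_univ hS hp1 hp2
  have hchild : IsChild (glue p1 p2) c :=
    ⟨glue_eq_RR_of_fixed c (mem_nonroot.1 (hS hcS)) hp1c (p2_fix_of_mem_S hp2 c hcS),
     mem_nonroot.1 (hS hcS)⟩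
  have habs : ∀ v ∈ S, Reaches p1 v c := reaches_absorb hp1.2.1 (fun u hu => S.le_max' u hu)
      (fun u hu hu2 => hp1.2.2.1 u hu ⟨c, hcS, lt_of_le_of_ne (S.le_max' u hu) hu2⟩)
  have hdescS : desc p1 c = S := by
    ext w
    rw [mem_desc]
    constructor
    · intro hw
      by_contra hcon
      obtain ⟨k, hk⟩ := hw
      rw [Function.iterate_fixed (hp1.1 w hcon) k] at hk
      exact hcon (hk ▸ hcS)
    · intro hw
      exact habs w hw
  have hdg : desc (glue p1 p2) c = desc p1 c := desc_glue_S hS hp1 hp2 c hcS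
  have hLc : Reaches (glue p1 p2) (LL n) c := by
    have : LL n ∈ desc (glue p1 p2) c := by rw [hdg, hdescS]; exact hL
    exact mem_desc.1 this
  ext v
  rw [mem_sideL_iff hgrel hchild hLc, ← mem_desc, hdg, hdescS]

lemma restr_glue_S {p1 p2 : Fin (n + 2) → Fin (n + 2)} {S : Finset (Fin (n + 2))}
    (hS : S ⊆ nonroot n) (hp1 : isRel S p1) (hp2 : isRel (nonroot n \ S) p2) :
    restr (glue p1 p2) S = p1 := by
  funext v
  by_cases hvS : v ∈ S
  · by_cases hmv : p1 v ≠ v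
    · have h1 : glue p1 p2 v = p1 v := glue_eq_of_moved hS v hvS hmv
      have h2 : glue p1 p2 v ≠ RR n := by
        rw [h1]
        intro hcon
        exact RR_not_mem_S hS (hcon ▸ hp1.2.1 v hvS)
      unfold restr
      rw [if_pos ⟨hvS, h2⟩]
      exact h1
    · push_neg at hmv
      have h1 : glue p1 p2 v = RR n :=
        glue_eq_RR_of_fixed v (mem_nonroot.1 (hS hvS)) hmv (p2_fix_of_mem_S hp2 v hvS)
      unfold restr
      rw [if_neg (by simp [h1])]
      exact hmv.symm
  · unfold restr
    rw [if_neg (by tauto)]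
    exact (hp1.1 v hvS).symm

lemma restr_glue_T {p1 p2 : Fin (n + 2) → Fin (n + 2)} {S : Finset (Fin (n + 2))}
    (hS : S ⊆ nonroot n) (hp1 : isRel S p1) (hp2 : isRel (nonroot n \ S) p2) :
    restr (glue p1 p2) (nonroot n \ S) = p2 := by
  have hsd : nonroot n \ (nonroot n \ S) = S := Finset.sdiff_sdiff_eq_self hS
  have hp1' : isRel (nonroot n \ (nonroot n \ S)) p1 := by rw [hsd]; exact hp1
  rw [glue_comm p1 p2 (glue_disj hp1 hp2)]
  exact restr_glue_S (Finset.sdiff_subset) hp2 hp1'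

noncomputable def fwdMap
    (t : Σ _ : Finset (Fin (n + 2)), (Fin (n + 2) → Fin (n + 2)) × (Fin (n + 2) → Fin (n + 2))) :
    (Fin (n + 2) → Fin (n + 2)) × Bool :=
  (glue t.2.1 t.2.2, decide (LL n ∈ t.1))

noncomputable def bwdMap (y : (Fin (n + 2) → Fin (n + 2)) × Bool) :
    Σ _ : Finset (Fin (n + 2)), (Fin (n + 2) → Fin (n + 2)) × (Fin (n + 2) → Fin (n + 2)) :=
  if y.2 = true then
    ⟨sideL y.1, (restr y.1 (sideL y.1), restr y.1 (nonroot n \ sideL y.1))⟩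
  else
    ⟨nonroot n \ sideL y.1,
      (restr y.1 (nonroot n \ sideL y.1), restr y.1 (nonroot n \ (nonroot n \ sideL y.1)))⟩

lemma glue_split_sum (q : ℚ) (n : ℕ) :
    (2 + q * ((n : ℚ) + 1)) *
      ∑ S ∈ (nonroot n).powerset,
        ((∑ p1 ∈ relTrees S, W q p1) * ∑ p2 ∈ relTrees (nonroot n \ S), W q p2)
    = 2 * ∑ p ∈ relTrees (Finset.univ : Finset (Fin (n + 2))), W q p := by
  classical
  have hL : LL n ∈ nonroot n := mem_nonroot.2 LL_ne_RR
  have lhs_eq :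
      (2 + q * ((n : ℚ) + 1)) *
        ∑ S ∈ (nonroot n).powerset,
          ((∑ p1 ∈ relTrees S, W q p1) * ∑ p2 ∈ relTrees (nonroot n \ S), W q p2)
      = ∑ t ∈ ((nonroot n).powerset).sigma
            (fun S => relTrees S ×ˢ relTrees (nonroot n \ S)),
          (2 + q * ((n : ℚ) + 1)) * (W q t.2.1 * W q t.2.2) := by
    rw [Finset.sum_sigma, Finset.mul_sum]
    apply Finset.sum_congr rfl
    intro S _
    rw [Finset.sum_product, Finset.sum_mul_sum, Finset.mul_sum]
    apply Finset.sum_congr rfl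
    intro p1 _
    rw [Finset.mul_sum]
  have rhs_eq :
      2 * ∑ p ∈ relTrees (Finset.univ : Finset (Fin (n + 2))), W q p
      = ∑ y ∈ relTrees (Finset.univ : Finset (Fin (n + 2))) ×ˢ (Finset.univ : Finset Bool),
          W q y.1 := by
    rw [Finset.sum_product, Finset.mul_sum]
    apply Finset.sum_congr rfl
    intro p _
    have h2 : ∑ y ∈ (Finset.univ : Finset Bool), W q ((p, y) : (Fin (n+2) → Fin (n+2)) × Bool).1
        = ∑ _y ∈ (Finset.univ : Finset Bool), W q p := rfl
    rw [h2, Finset.sum_const]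
    simp [two_mul]
  rw [lhs_eq, rhs_eq]
  apply Finset.sum_nbij' (i := fwdMap) (j := bwdMap)
  · -- fwd maps into target
    rintro ⟨S, p1, p2⟩ ht
    rw [Finset.mem_sigma] at ht
    obtain ⟨hS, hpr⟩ := ht
    rw [Finset.mem_product] at hpr
    have hS' : S ⊆ nonroot n := Finset.mem_powerset.1 hS
    have hp1 : isRel S p1 := mem_relTrees.1 hpr.1
    have hp2 : isRel (nonroot n \ S) p2 := mem_relTrees.1 hpr.2
    rw [Finset.mem_product]
    exact ⟨mem_relTrees.2 (glue_mem_rel_univ hS' hp1 hp2), Finset.mem_univ _⟩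
  · -- bwd maps into source
    rintro ⟨p, b⟩ hy
    rw [Finset.mem_product] at hy
    have hrel : isRel Finset.univ p := mem_relTrees.1 hy.1
    obtain ⟨cL, hcL, hLcL⟩ := exists_child_over hrel LL_ne_RR
    have hmem1 : restr p (sideL p) ∈ relTrees (sideL p) :=
      mem_relTrees.2 (restr_mem_rel hrel sideL_subset (sideL_hD2 hrel hcL hLcL)
        (sideL_hD3 hrel hcL hLcL))
    have hmem2 : restr p (nonroot n \ sideL p) ∈ relTrees (nonroot n \ sideL p) :=
      mem_relTrees.2 (restr_mem_rel hrel Finset.sdiff_subset (sideT_hD2 hrel hcL hLcL)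
        (sideT_hD3 hrel hcL hLcL))
    have hsd : nonroot n \ (nonroot n \ sideL p) = sideL p :=
      Finset.sdiff_sdiff_eq_self sideL_subset
    cases b with
    | true =>
      rw [show bwdMap ((p, true) : (Fin (n + 2) → Fin (n + 2)) × Bool) =
        ⟨sideL p, (restr p (sideL p), restr p (nonroot n \ sideL p))⟩ from rfl]
      rw [Finset.mem_sigma, Finset.mem_product]
      exact ⟨Finset.mem_powerset.2 sideL_subset, hmem1, hmem2⟩
    | false =>
      rw [show bwdMap ((p, false) : (Fin (n + 2) → Fin (n + 2)) × Bool) =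
        ⟨nonroot n \ sideL p, (restr p (nonroot n \ sideL p),
          restr p (nonroot n \ (nonroot n \ sideL p)))⟩ from rfl]
      rw [Finset.mem_sigma, Finset.mem_product]
      refine ⟨Finset.mem_powerset.2 Finset.sdiff_subset, hmem2, ?_⟩
      rw [hsd]
      exact hmem1
  · -- left inverse
    rintro ⟨S, p1, p2⟩ ht
    rw [Finset.mem_sigma] at ht
    obtain ⟨hSmem, hpr⟩ := ht
    rw [Finset.mem_product] at hpr
    have hS : S ⊆ nonroot n := Finset.mem_powerset.1 hSmem
    have hp1 : isRel S p1 := mem_relTrees.1 hpr.1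
    have hp2 : isRel (nonroot n \ S) p2 := mem_relTrees.1 hpr.2
    have hsd : nonroot n \ (nonroot n \ S) = S := Finset.sdiff_sdiff_eq_self hS
    by_cases hLS : LL n ∈ S
    · have hbit : decide (LL n ∈ S) = true := by simp [hLS]
      show bwdMap (glue p1 p2, decide (LL n ∈ S)) = ⟨S, (p1, p2)⟩
      rw [hbit]
      show (⟨sideL (glue p1 p2), (restr (glue p1 p2) (sideL (glue p1 p2)),
        restr (glue p1 p2) (nonroot n \ sideL (glue p1 p2)))⟩ :
          Σ _ : Finset (Fin (n + 2)), _ × _) = ⟨S, (p1, p2)⟩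
      rw [sideL_glue hS hp1 hp2 hLS, restr_glue_S hS hp1 hp2, restr_glue_T hS hp1 hp2]
    · have hLT : LL n ∈ nonroot n \ S := Finset.mem_sdiff.2 ⟨hL, hLS⟩
      have hbit : decide (LL n ∈ S) = false := by simp [hLS]
      have hp1' : isRel (nonroot n \ (nonroot n \ S)) p1 := by rw [hsd]; exact hp1
      have hsideT : sideL (glue p1 p2) = nonroot n \ S := by
        rw [glue_comm p1 p2 (glue_disj hp1 hp2)]
        exact sideL_glue Finset.sdiff_subset hp2 hp1' hLT
      show bwdMap (glue p1 p2, decide (LL n ∈ S)) = ⟨S, (p1, p2)⟩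
      rw [hbit]
      show (⟨nonroot n \ sideL (glue p1 p2), (restr (glue p1 p2) (nonroot n \ sideL (glue p1 p2)),
        restr (glue p1 p2) (nonroot n \ (nonroot n \ sideL (glue p1 p2))))⟩ :
          Σ _ : Finset (Fin (n + 2)), _ × _) = ⟨S, (p1, p2)⟩
      rw [hsideT, hsd, restr_glue_S hS hp1 hp2, restr_glue_T hS hp1 hp2]
  · -- right inverse
    rintro ⟨p, b⟩ hy
    rw [Finset.mem_product] at hy
    have hrel : isRel Finset.univ p := mem_relTrees.1 hy.1
    obtain ⟨cL, hcL, hLcL⟩ := exists_child_over hrel LL_ne_RR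
    have hLmem : LL n ∈ sideL p := (mem_sideL_iff hrel hcL hLcL).2 hLcL
    have hsd : nonroot n \ (nonroot n \ sideL p) = sideL p :=
      Finset.sdiff_sdiff_eq_self sideL_subset
    cases b with
    | true =>
      show fwdMap ⟨sideL p, (restr p (sideL p), restr p (nonroot n \ sideL p))⟩ = (p, true)
      unfold fwdMap
      rw [glue_restr hrel sideL_subset]
      simp [hLmem]
    | false =>
      show fwdMap ⟨nonroot n \ sideL p, (restr p (nonroot n \ sideL p),
        restr p (nonroot n \ (nonroot n \ sideL p)))⟩ = (p, false)
      unfold fwdMap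
      simp only
      rw [hsd]
      have hglue : glue (restr p (nonroot n \ sideL p)) (restr p (sideL p)) = p := by
        have := glue_restr hrel (D := nonroot n \ sideL p) Finset.sdiff_subset
        rwa [hsd] at this
      rw [hglue]
      have : LL n ∉ nonroot n \ sideL p := by simp [hLmem]
      simp [this]
  · -- weights
    rintro ⟨S, p1, p2⟩ ht
    rw [Finset.mem_sigma] at ht
    obtain ⟨hSmem, hpr⟩ := ht
    rw [Finset.mem_product] at hpr
    have hS : S ⊆ nonroot n := Finset.mem_powerset.1 hSmem
    have hp1 : isRel S p1 := mem_relTrees.1 hpr.1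
    have hp2 : isRel (nonroot n \ S) p2 := mem_relTrees.1 hpr.2
    exact (W_glue hS hp1 hp2 q).symm

end Split

end Glue

/-- the binary-tree generating sum -/
noncomputable def F (q : ℚ) (k : ℕ) : ℚ :=
  ∑ T ∈ Tree.treesOfNumNodesEq k, hookProd (fun h => (2 + q * ((h : ℚ) - 1)) / (h : ℚ)) T

lemma F_zero (q : ℚ) : F q 0 = 1 := by
  unfold F
  unfold Tree.treesOfNumNodesEq
  rw [BinaryTree.treesOfNumNodesEq_zero, Finset.sum_singleton]
  rfl

lemma F_succ (q : ℚ) (k : ℕ) :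
    F q (k + 1) = (2 + q * ((k + 1 : ℚ) - 1)) / ((k + 1 : ℚ)) *
      ∑ ij ∈ Finset.HasAntidiagonal.antidiagonal k, F q ij.1 * F q ij.2 := by
  classical
  set f : ℕ → ℚ := fun h => (2 + q * ((h : ℚ) - 1)) / (h : ℚ) with hf
  have hdisj : Set.PairwiseDisjoint (↑(Finset.HasAntidiagonal.antidiagonal k) : Set (ℕ × ℕ))
      (fun ij => BinaryTree.pairwiseNode (Tree.treesOfNumNodesEq ij.1)
        (Tree.treesOfNumNodesEq ij.2)) := by
    intro x _ y _ hxy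
    simp only [Function.onFun]
    rw [Finset.disjoint_left]
    intro a hax hay
    simp only [BinaryTree.pairwiseNode, Finset.mem_map, Finset.mem_product,
      Function.Embedding.coeFn_mk] at hax hay
    obtain ⟨⟨l, r⟩, ⟨hl, hr⟩, rfl⟩ := hax
    obtain ⟨⟨l', r'⟩, ⟨hl', hr'⟩, heq⟩ := hay
    injection heq with h0 h1 h2
    subst h1
    subst h2
    apply hxy
    have hx1 := BinaryTree.mem_treesOfNumNodesEq.1 hl
    have hx2 := BinaryTree.mem_treesOfNumNodesEq.1 hr
    have hy1 := BinaryTree.mem_treesOfNumNodesEq.1 hl'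
    have hy2 := BinaryTree.mem_treesOfNumNodesEq.1 hr'
    exact Prod.ext (by rw [← hx1, ← hy1]) (by rw [← hx2, ← hy2])
  unfold F
  unfold Tree.treesOfNumNodesEq
  rw [BinaryTree.treesOfNumNodesEq_succ, Finset.sum_biUnion hdisj, Finset.mul_sum]
  apply Finset.sum_congr rfl
  intro ij hij
  have hijsum : ij.1 + ij.2 = k := Finset.HasAntidiagonal.mem_antidiagonal.1 hij
  have hmap : ∑ T ∈ BinaryTree.pairwiseNode (Tree.treesOfNumNodesEq ij.1)
        (Tree.treesOfNumNodesEq ij.2), hookProd f T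
      = ∑ lr ∈ Tree.treesOfNumNodesEq ij.1 ×ˢ Tree.treesOfNumNodesEq ij.2,
          hookProd f (Tree.node () lr.1 lr.2) := by
    rw [Finset.sum_map]
    rfl
  rw [hmap, Finset.sum_product]
  have hterm : ∀ l ∈ Tree.treesOfNumNodesEq ij.1, ∀ r ∈ Tree.treesOfNumNodesEq ij.2,
      hookProd f (Tree.node () l r) = f (k + 1) * (hookProd f l * hookProd f r) := by
    intro l hl r hr
    have h1 : l.numNodes = ij.1 := BinaryTree.mem_treesOfNumNodesEq.1 hl
    have h2 : r.numNodes = ij.2 := BinaryTree.mem_treesOfNumNodesEq.1 hr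
    show f (l.numNodes + r.numNodes + 1) * hookProd f l * hookProd f r = _
    rw [h1, h2, hijsum]
    ring
  calc ∑ l ∈ Tree.treesOfNumNodesEq ij.1, ∑ r ∈ Tree.treesOfNumNodesEq ij.2,
        hookProd f (Tree.node () l r)
      = ∑ l ∈ Tree.treesOfNumNodesEq ij.1, ∑ r ∈ Tree.treesOfNumNodesEq ij.2,
        f (k + 1) * (hookProd f l * hookProd f r) := by
        apply Finset.sum_congr rfl
        intro l hl
        apply Finset.sum_congr rfl
        intro r hr
        exact hterm l hl r hr
    _ = f (k + 1) * ((∑ l ∈ Tree.treesOfNumNodesEq ij.1, hookProd f l) *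
        ∑ r ∈ Tree.treesOfNumNodesEq ij.2, hookProd f r) := by
        rw [Finset.sum_mul_sum, Finset.mul_sum]
        apply Finset.sum_congr rfl
        intro l _
        rw [Finset.mul_sum]
    _ = (2 + q * ((k + 1 : ℚ) - 1)) / ((k + 1 : ℚ)) * (F q ij.1 * F q ij.2) := by
        unfold F
        rw [hf]
        push_cast
        ring

lemma A_zero (q : ℚ) : A q 0 = 1 := by
  unfold A
  have h1 : andreTrees 0 = (Finset.univ : Finset (Fin 0 → Fin 0)) := by
    unfold andreTrees
    apply Finset.filter_true_of_mem
    intro p _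
    exact ⟨fun i => i.elim0, fun i => i.elim0, fun j => j.elim0⟩
  rw [h1]
  have h2 : ∀ p : Fin 0 → Fin 0,
      ∏ v ∈ internalsA 0 p, (2 + q * ((hookA 0 p v : ℚ) - 1)) = 1 := by
    intro p
    apply Finset.prod_eq_one
    intro v _
    exact v.elim0
  rw [Finset.sum_congr rfl (fun p _ => h2 p), Finset.sum_const]
  simp

lemma A_one (q : ℚ) : A q 1 = 1 := by
  unfold A
  have h1 : andreTrees 1 = (Finset.univ : Finset (Fin 1 → Fin 1)) := by
    unfold andreTrees
    apply Finset.filter_true_of_mem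
    intro p _
    refine ⟨fun i hi => absurd hi (by omega), fun i _ => Subsingleton.elim _ _, fun j => ?_⟩
    calc (Finset.univ.filter fun i : Fin 1 => (i : ℕ) + 1 < 1 ∧ p i = j).card
        ≤ (Finset.univ : Finset (Fin 1)).card := Finset.card_filter_le _ _
      _ ≤ 2 := by simp
  rw [h1]
  have h2 : ∀ p : Fin 1 → Fin 1,
      ∏ v ∈ internalsA 1 p, (2 + q * ((hookA 1 p v : ℚ) - 1)) = 1 := by
    intro p
    apply Finset.prod_eq_one
    intro v hv
    exfalso
    unfold internalsA at hv
    simp only [Finset.mem_filter, Finset.mem_univ, true_and] at hv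
    have : hookA 1 p v ≤ 1 := by
      unfold hookA
      calc _ ≤ (Finset.univ : Finset (Fin 1)).card := Finset.card_filter_le _ _
        _ = 1 := by simp
    omega
  rw [Finset.sum_congr rfl (fun p _ => h2 p), Finset.sum_const]
  have : (Finset.univ : Finset (Fin 1 → Fin 1)).card = 1 := by
    rw [Finset.card_univ]
    simp
  rw [this]
  simp

lemma A_rec (q : ℚ) (n : ℕ) :
    2 * A q (n + 2) = (2 + q * ((n : ℚ) + 1)) *
      ∑ ij ∈ Finset.HasAntidiagonal.antidiagonal (n + 1),
        (((n + 1).choose ij.1 : ℚ) * (A q ij.1 * A q ij.2)) := by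
  have hcard : (nonroot n).card = n + 1 := by
    unfold nonroot
    rw [Finset.card_erase_of_mem (Finset.mem_univ _), Finset.card_univ]
    simp
  have hstep1 :
      ∑ S ∈ (nonroot n).powerset,
        ((∑ p1 ∈ relTrees S, W q p1) * ∑ p2 ∈ relTrees (nonroot n \ S), W q p2)
      = ∑ S ∈ (nonroot n).powerset, A q S.card * A q (n + 1 - S.card) := by
    apply Finset.sum_congr rfl
    intro S hS
    have hsub : S ⊆ nonroot n := Finset.mem_powerset.1 hS
    rw [relSum_eq_A, relSum_eq_A, Finset.card_sdiff_of_subset hsub, hcard]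
  have hstep2 :
      ∑ S ∈ (nonroot n).powerset, A q S.card * A q (n + 1 - S.card)
      = ∑ j ∈ Finset.range (n + 2), (((n + 1).choose j : ℚ) * (A q j * A q (n + 1 - j))) := by
    rw [Finset.sum_powerset, hcard]
    apply Finset.sum_congr rfl
    intro j hj
    have hinner : ∀ S ∈ Finset.powersetCard j (nonroot n),
        A q S.card * A q (n + 1 - S.card) = A q j * A q (n + 1 - j) := by
      intro S hS
      rw [(Finset.mem_powersetCard.1 hS).2]
    rw [Finset.sum_congr rfl hinner, Finset.sum_const, Finset.card_powersetCard, hcard,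
      nsmul_eq_mul]
  have hstep3 :
      ∑ ij ∈ Finset.HasAntidiagonal.antidiagonal (n + 1),
        (((n + 1).choose ij.1 : ℚ) * (A q ij.1 * A q ij.2))
      = ∑ j ∈ Finset.range (n + 2), (((n + 1).choose j : ℚ) * (A q j * A q (n + 1 - j))) :=
    Finset.Nat.sum_antidiagonal_eq_sum_range_succ_mk _ (n + 1)
  rw [hstep3, ← hstep2, ← hstep1, A_eq_relSum]
  exact (glue_split_sum q n).symm

lemma A_eq_F (q : ℚ) (k : ℕ) : A q k = (k.factorial : ℚ) / 2 ^ k * F q k := by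
  induction k using Nat.strong_induction_on with
  | _ k ih =>
    match k with
    | 0 => rw [A_zero, F_zero]; norm_num
    | 1 =>
      rw [A_one]
      have hF1 : F q 1 = 2 := by
        rw [show (1 : ℕ) = 0 + 1 from rfl, F_succ]
        rw [Finset.Nat.antidiagonal_zero, Finset.sum_singleton, F_zero]
        norm_num
      rw [hF1]
      norm_num
    | (n + 2) =>
      have h2 : A q (n + 2) = ((2 + q * ((n : ℚ) + 1)) *
          ∑ ij ∈ Finset.HasAntidiagonal.antidiagonal (n + 1),
            (((n + 1).choose ij.1 : ℚ) * (A q ij.1 * A q ij.2))) / 2 := by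
        rw [← A_rec q n]
        ring
      have hFs : F q (n + 2) = (2 + q * ((n : ℚ) + 1)) / ((n : ℚ) + 2) *
          ∑ ij ∈ Finset.HasAntidiagonal.antidiagonal (n + 1), F q ij.1 * F q ij.2 := by
        rw [show n + 2 = (n + 1) + 1 from rfl, F_succ]
        push_cast
        ring
      rw [h2, hFs]
      rw [Finset.mul_sum, Finset.sum_div, Finset.mul_sum, Finset.mul_sum]
      apply Finset.sum_congr rfl
      intro ij hij
      have hijsum : ij.1 + ij.2 = n + 1 := Finset.HasAntidiagonal.mem_antidiagonal.1 hij
      have hi1 : ij.1 < n + 2 := by omega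
      have hi2 : ij.2 < n + 2 := by omega
      rw [ih ij.1 hi1, ih ij.2 hi2]
      have hchoose : (((n + 1).choose ij.1 : ℕ) : ℚ) * (ij.1.factorial : ℚ) *
          (ij.2.factorial : ℚ) = ((n + 1).factorial : ℚ) := by
        have h := Nat.choose_mul_factorial_mul_factorial (show ij.1 ≤ n + 1 by omega)
        have hj : n + 1 - ij.1 = ij.2 := by omega
        rw [hj] at h
        exact_mod_cast congrArg (fun x : ℕ => (x : ℚ)) h
      have hfact : ((n + 2).factorial : ℚ) = ((n : ℚ) + 2) * ((n + 1).factorial : ℚ) := by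
        rw [show n + 2 = (n + 1) + 1 from rfl, Nat.factorial_succ]
        push_cast
        ring
      have hpow : (2 : ℚ) ^ (n + 2) = 2 ^ ij.1 * 2 ^ ij.2 * 2 := by
        rw [← pow_add, ← pow_succ]
        congr 1
        omega
      have hne1 : (2 : ℚ) ^ ij.1 ≠ 0 := pow_ne_zero _ two_ne_zero
      have hne2 : (2 : ℚ) ^ ij.2 ≠ 0 := pow_ne_zero _ two_ne_zero
      have hne3 : ((n : ℚ) + 2) ≠ 0 := by positivity
      rw [hfact, hpow]
      field_simp
      rw [← hchoose]
      ring

end Stmt8Aux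

/-- `Σ_{T ∈ 𝒜_n} ∏_{v internal} (2 + q(h_v - 1))
      = (n!/2^n) · Σ_{T ∈ 𝒯_n} ∏_{v ∈ T} ((2 + q(h_v - 1))/h_v)`,
the first sum over André trees on `n` vertices, the second over plane binary
trees with `n` vertices. -/
theorem stmt8 (n : ℕ) (hn : 1 ≤ n) (q : ℚ) :
    ∑ p ∈ andreTrees n, ∏ v ∈ internalsA n p, (2 + q * ((hookA n p v : ℚ) - 1))
      = (n.factorial : ℚ) / 2 ^ n *
          ∑ T ∈ Tree.treesOfNumNodesEq n,
            hookProd (fun h => (2 + q * ((h : ℚ) - 1)) / (h : ℚ)) T := by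
  have h := Stmt8Aux.A_eq_F q n
  unfold Stmt8Aux.A Stmt8Aux.F at h
  exact h
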